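/- Let a 2-coloring of the edges of the complete graph on t vertices be given, with t ≥ 2^16, and suppose each vertex i has weights (α_i, β_i) with α_i, β_i > 0. Let γ = min_i α_i·β_i. Then there exist a red clique S and a blue clique U such that (Σ_{s∈S} α_s)·(Σ_{u∈U} β_u) ≥ (γ/32)·(log₂ t)². -/

import Mathlib

lemma one_add_sq_le_exp (y : ℝ) (hy : 0 ≤ y) : 1 + y ^ 2 ≤ Real.exp y := by
  have h := Real.sum_le_exp_of_nonneg hy 4
  have e : ∑ i ∈ Finset.range 4, y ^ i / i.factorial = 1 + y + y^2/2 + y^3/6 := by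
    rw [Finset.sum_range_succ, Finset.sum_range_succ, Finset.sum_range_succ,
      Finset.sum_range_one]
    norm_num [Nat.factorial]
  rw [e] at h
  nlinarith [sq_nonneg (y - 3/2), mul_nonneg (mul_nonneg hy hy) hy]

lemma one_add_le_exp_sqrt (x : ℝ) (hx : 0 ≤ x) : 1 + x ≤ Real.exp (Real.sqrt x) := by
  have h := one_add_sq_le_exp (Real.sqrt x) (Real.sqrt_nonneg x)
  rwa [Real.sq_sqrt hx] at h

lemma nat_mul_sqrt_div (r s : ℕ) (hr : 0 < r) :
    (r : ℝ) * Real.sqrt ((s : ℝ) / r) = Real.sqrt ((r : ℝ) * s) := by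
  have hr' : (0:ℝ) < r := by exact_mod_cast hr
  rw [show (r:ℝ) * (s:ℝ) = (r:ℝ)^2 * ((s:ℝ)/r) by field_simp,
    Real.sqrt_mul (sq_nonneg _), Real.sqrt_sq hr'.le]

lemma choose_le_exp (r s : ℕ) (hr : 0 < r) (hs : 0 < s) :
    (((r + s).choose r : ℕ) : ℝ) ≤ Real.exp (2 * Real.sqrt ((r : ℝ) * s)) := by
  have hr' : (0:ℝ) < r := by exact_mod_cast hr
  have hs' : (0:ℝ) < s := by exact_mod_cast hs
  have hrs : (0:ℝ) < (r:ℝ) + s := by linarith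
  set p : ℝ := (r:ℝ) / ((r:ℝ) + s) with hp
  set q : ℝ := (s:ℝ) / ((r:ℝ) + s) with hq
  have hp0 : 0 < p := div_pos hr' hrs
  have hq0 : 0 < q := div_pos hs' hrs
  have hpq : p + q = 1 := by rw [hp, hq]; field_simp
  -- single term of binomial expansion
  have key : (((r+s).choose r : ℕ) : ℝ) * (p ^ r * q ^ s) ≤ 1 := by
    have h := add_pow p q (r + s)
    rw [hpq, one_pow] at h
    have hmem : r ∈ Finset.range (r + s + 1) := by
      simp only [Finset.mem_range]; omega
    have h2 := Finset.single_le_sum (f := fun m => p ^ m * q ^ (r + s - m) * ((r+s).choose m : ℝ))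
      (fun i _ => by positivity) hmem
    rw [← h] at h2
    simp only [hp, hq] at h2 ⊢
    have hsub : r + s - r = s := by omega
    rw [hsub] at h2
    linarith [h2]
  have hchoose : (((r+s).choose r : ℕ) : ℝ) ≤ (1/p) ^ r * (1/q) ^ s := by
    have hppos : (0:ℝ) < p ^ r * q ^ s := by positivity
    have heq : (1/p) ^ r * (1/q) ^ s * (p ^ r * q ^ s) = 1 := by
      rw [mul_mul_mul_comm, ← mul_pow, ← mul_pow, one_div_mul_cancel hp0.ne',
        one_div_mul_cancel hq0.ne', one_pow, one_pow, one_mul]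
    refine le_of_mul_le_mul_right ?_ hppos
    rw [heq]; exact key
  have h1 : (1/p) = 1 + (s:ℝ)/r := by rw [hp]; field_simp
  have h2 : (1/q) = 1 + (r:ℝ)/s := by rw [hq]; field_simp; ring
  have b1 : (1/p) ^ r ≤ Real.exp (Real.sqrt ((r:ℝ)*s)) := by
    rw [h1, ← nat_mul_sqrt_div r s hr, Real.exp_nat_mul]
    exact pow_le_pow_left₀ (by positivity) (one_add_le_exp_sqrt _ (by positivity)) r
  have b2 : (1/q) ^ s ≤ Real.exp (Real.sqrt ((r:ℝ)*s)) := by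
    rw [h2, show (r:ℝ)*s = (s:ℝ)*r by ring, ← nat_mul_sqrt_div s r hs, Real.exp_nat_mul]
    exact pow_le_pow_left₀ (by positivity) (one_add_le_exp_sqrt _ (by positivity)) s
  calc (((r+s).choose r : ℕ) : ℝ) ≤ (1/p) ^ r * (1/q) ^ s := hchoose
    _ ≤ Real.exp (Real.sqrt ((r:ℝ)*s)) * Real.exp (Real.sqrt ((r:ℝ)*s)) := by
        apply mul_le_mul b1 b2 (by positivity) (Real.exp_nonneg _)
    _ = Real.exp (2 * Real.sqrt ((r:ℝ)*s)) := by rw [← Real.exp_add]; ring_nf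


lemma insert_clique {t : ℕ} (F : Fin t → Fin t → Bool) (hsym : ∀ u v, F u v = F v u)
    (c : Bool) (v : Fin t) (S : Finset (Fin t))
    (hS : ∀ w ∈ S, F v w = c)
    (hcl : ∀ u ∈ S, ∀ w ∈ S, u ≠ w → F u w = c) :
    ∀ x ∈ insert v S, ∀ y ∈ insert v S, x ≠ y → F x y = c := by
  intro x hx y hy hxy
  rcases Finset.mem_insert.mp hx with h1 | h1 <;> rcases Finset.mem_insert.mp hy with h2 | h2
  · exact absurd (h1.trans h2.symm) hxy
  · rw [h1]; exact hS y h2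
  · rw [h2, hsym]; exact hS x h1
  · exact hcl x h1 y h2 hxy

lemma es {t : ℕ} (F : Fin t → Fin t → Bool) (hsym : ∀ u v, F u v = F v u) :
    ∀ (n a b : ℕ), a + b ≤ n → ∀ W : Finset (Fin t), (a + b).choose a ≤ W.card →
    (∃ S ⊆ W, S.card = a + 1 ∧ ∀ u ∈ S, ∀ v ∈ S, u ≠ v → F u v = true) ∨
    (∃ U ⊆ W, U.card = b + 1 ∧ ∀ u ∈ U, ∀ v ∈ U, u ≠ v → F u v = false) := by
  have hsingle : ∀ (c : Bool) (W : Finset (Fin t)), 0 < W.card →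
      ∃ S ⊆ W, S.card = 1 ∧ ∀ u ∈ S, ∀ v ∈ S, u ≠ v → F u v = c := by
    intro c W hW
    obtain ⟨v, hv⟩ := Finset.card_pos.mp hW
    exact ⟨{v}, Finset.singleton_subset_iff.mpr hv, Finset.card_singleton v,
      fun u hu w hw huw => absurd (by
        rw [Finset.mem_singleton] at hu hw; rw [hu, hw]) huw⟩
  intro n
  induction n with
  | zero =>
    intro a b hab W hW
    obtain ⟨rfl, rfl⟩ : a = 0 ∧ b = 0 := by omega
    simp only [Nat.choose_self] at hW
    exact Or.inl (hsingle true W (by omega))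
  | succ n ih =>
    intro a b hab W hW
    match a, b with
    | 0, b =>
      have : 0 < W.card := by
        have := Nat.choose_pos (show 0 ≤ 0 + b by omega)
        omega
      exact Or.inl (hsingle true W this)
    | a + 1, 0 =>
      have : 0 < W.card := by
        have := Nat.choose_pos (show a + 1 ≤ a + 1 + 0 by omega)
        omega
      exact Or.inr (hsingle false W this)
    | a + 1, b + 1 =>
      have hWpos : 0 < W.card := by
        have := Nat.choose_pos (show a + 1 ≤ a + 1 + (b + 1) by omega)
        omega
      obtain ⟨v, hv⟩ := Finset.card_pos.mp hWpos
      set R := (W.erase v).filter (fun w => F v w = true) with hR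
      set B := (W.erase v).filter (fun w => ¬ (F v w = true)) with hB
      have hRW : R ⊆ W := (Finset.filter_subset _ _).trans (Finset.erase_subset v W)
      have hBW : B ⊆ W := (Finset.filter_subset _ _).trans (Finset.erase_subset v W)
      have hcards : R.card + B.card + 1 = W.card := by
        rw [hR, hB, Finset.card_filter_add_card_filter_not,
          Finset.card_erase_of_mem hv]
        omega
      have hpascal : (a + 1 + (b + 1)).choose (a + 1)
          = (a + (b + 1)).choose a + (a + 1 + b).choose (a + 1) := by
        rw [show a + 1 + (b + 1) = (a + (b+1)) + 1 by omega, Nat.choose_succ_succ]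
        congr 2
        omega
      by_cases hRc : (a + (b + 1)).choose a ≤ R.card
      · rcases ih a (b + 1) (by omega) R hRc with ⟨S, hSR, hScard, hSred⟩ | ⟨U, hUR, hUcard, hUblue⟩
        · refine Or.inl ⟨insert v S, ?_, ?_, ?_⟩
          · exact Finset.insert_subset hv (hSR.trans hRW)
          · rw [Finset.card_insert_of_notMem, hScard]
            intro hvS
            exact (Finset.notMem_erase v W) (Finset.mem_of_mem_filter _ (hR ▸ hSR hvS))
          · refine insert_clique F hsym true v S (fun w hw => ?_) hSred
            have := hSR hw
            rw [hR, Finset.mem_filter] at this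
            exact this.2
        · exact Or.inr ⟨U, hUR.trans hRW, hUcard, hUblue⟩
      · have hBc : (a + 1 + b).choose (a + 1) ≤ B.card := by omega
        rcases ih (a + 1) b (by omega) B hBc with ⟨S, hSB, hScard, hSred⟩ | ⟨U, hUB, hUcard, hUblue⟩
        · exact Or.inl ⟨S, hSB.trans hBW, hScard, hSred⟩
        · refine Or.inr ⟨insert v U, ?_, ?_, ?_⟩
          · exact Finset.insert_subset hv (hUB.trans hBW)
          · rw [Finset.card_insert_of_notMem, hUcard]
            intro hvU
            exact (Finset.notMem_erase v W) (Finset.mem_of_mem_filter _ (hB ▸ hUB hvU))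
          · refine insert_clique F hsym false v U (fun w hw => ?_) hUblue
            have := hUB hw
            rw [hB, Finset.mem_filter] at this
            have h2 := this.2
            simpa using h2




lemma prod_ramsey {t : ℕ} (F : Fin t → Fin t → Bool) (hsym : ∀ u v, F u v = F v u)
    (W : Finset (Fin t)) (hW : W.Nonempty) :
    ∃ R U : Finset (Fin t), R ⊆ W ∧ U ⊆ W ∧
      (∀ u ∈ R, ∀ v ∈ R, u ≠ v → F u v = true) ∧
      (∀ u ∈ U, ∀ v ∈ U, u ≠ v → F u v = false) ∧
      0 < R.card ∧ 0 < U.card ∧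
      (W.card : ℝ) < Real.exp (2 * Real.sqrt ((R.card : ℝ) * U.card)) := by
  classical
  obtain ⟨v, hv⟩ := hW
  set P : ℕ → Prop := fun a => ∃ S ⊆ W, S.card = a ∧ ∀ u ∈ S, ∀ w ∈ S, u ≠ w → F u w = true
    with hP
  set Q : ℕ → Prop := fun b => ∃ U ⊆ W, U.card = b ∧ ∀ u ∈ U, ∀ w ∈ U, u ≠ w → F u w = false
    with hQ
  have hsingle : ∀ c : Bool, ∃ S ⊆ W, S.card = 1 ∧ ∀ u ∈ S, ∀ w ∈ S, u ≠ w → F u w = c := by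
    intro c
    exact ⟨{v}, Finset.singleton_subset_iff.mpr hv, Finset.card_singleton v,
      fun u hu w hw huw => absurd (by
        rw [Finset.mem_singleton] at hu hw; rw [hu, hw]) huw⟩
  have hWcard : 1 ≤ W.card := Finset.card_pos.mpr ⟨v, hv⟩
  set r := Nat.findGreatest P W.card with hr
  set s := Nat.findGreatest Q W.card with hs
  have hr1 : 1 ≤ r := Nat.le_findGreatest hWcard (hsingle true)
  have hs1 : 1 ≤ s := Nat.le_findGreatest hWcard (hsingle false)
  have hPr : P r := Nat.findGreatest_spec hWcard (hsingle true)
  have hQs : Q s := Nat.findGreatest_spec hWcard (hsingle false)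
  have hnPr : ¬ P (r + 1) := by
    by_cases h : r + 1 ≤ W.card
    · exact Nat.findGreatest_is_greatest (Nat.lt_succ_self r) h
    · rintro ⟨S, hSW, hScard, -⟩
      have := Finset.card_le_card hSW
      omega
  have hnQs : ¬ Q (s + 1) := by
    by_cases h : s + 1 ≤ W.card
    · exact Nat.findGreatest_is_greatest (Nat.lt_succ_self s) h
    · rintro ⟨S, hSW, hScard, -⟩
      have := Finset.card_le_card hSW
      omega
  have hlt : W.card < (r + s).choose r := by
    by_contra h
    push_neg at h
    rcases es F hsym (r + s) r s le_rfl W h with ⟨S, hSW, hScard, hSred⟩ | ⟨U, hUW, hUcard, hUblue⟩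
    · exact hnPr ⟨S, hSW, hScard, hSred⟩
    · exact hnQs ⟨U, hUW, hUcard, hUblue⟩
  obtain ⟨R, hRW, hRcard, hRred⟩ := hPr
  obtain ⟨U, hUW, hUcard, hUblue⟩ := hQs
  refine ⟨R, U, hRW, hUW, hRred, hUblue, by omega, by omega, ?_⟩
  calc (W.card : ℝ) < ((r + s).choose r : ℕ) := by exact_mod_cast hlt
    _ ≤ Real.exp (2 * Real.sqrt ((r : ℝ) * s)) := choose_le_exp r s (by omega) (by omega)
    _ = Real.exp (2 * Real.sqrt ((R.card : ℝ) * U.card)) := by rw [hRcard, hUcard]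


lemma log_two_ge : (2:ℝ)/3 ≤ Real.log 2 := by
  have := Real.log_two_gt_d9
  norm_num at this ⊢
  linarith

lemma logb2_le_quarter (x : ℝ) (hx : 16 ≤ x) : Real.logb 2 x ≤ x / 4 := by
  have hx0 : (0:ℝ) < x := by linarith
  have h16 : Real.logb 2 (16:ℝ) = 4 := by
    rw [show (16:ℝ) = 2^(4:ℕ) by norm_num, Real.logb_pow]
    norm_num [Real.logb_self_eq_one]
  have hsplit : Real.logb 2 x = Real.logb 2 (x/16) + 4 := by
    rw [← h16, ← Real.logb_mul (by positivity) (by norm_num)]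
    norm_num
  have hlog : Real.log (x/16) ≤ x/16 - 1 := Real.log_le_sub_one_of_pos (by positivity)
  have hlb : Real.logb 2 (x/16) ≤ (x/16 - 1) * (3/2) := by
    rw [Real.logb, div_le_iff₀ (Real.log_pos (by norm_num))]
    nlinarith [log_two_ge, hlog, Real.log_nonneg (show (1:ℝ) ≤ x/16 by linarith)]
  rw [hsplit]
  linarith

lemma logb2_mono {x y : ℝ} (hx : 0 < x) (hxy : x ≤ y) : Real.logb 2 x ≤ Real.logb 2 y :=
  (Real.logb_le_logb (by norm_num) hx (by linarith)).mpr hxy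







/-- Weighted Ramsey theorem: in a 2-coloring (red = `true`, blue = `false`) of `K_t`
with `t ≥ 2^16` and vertex weights `(α i, β i)`, taking `γ = min_i α i * β i`,
there is a red clique `S` and a blue clique `U` with
`(Σ_{s∈S} α s)·(Σ_{u∈U} β u) ≥ (γ/32)·(log₂ t)²`. -/
theorem weighted_ramsey (t : ℕ) (ht : 2 ^ 16 ≤ t) (F : Fin t → Fin t → Bool)
    (hsym : ∀ u v, F u v = F v u)
    (α β : Fin t → ℝ) (hα : ∀ i, 0 < α i) (hβ : ∀ i, 0 < β i)
    (γ : ℝ) (hγ : IsLeast {x : ℝ | ∃ i, x = α i * β i} γ) :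
    ∃ S U : Finset (Fin t),
      (∀ u ∈ S, ∀ v ∈ S, u ≠ v → F u v = true) ∧
      (∀ u ∈ U, ∀ v ∈ U, u ≠ v → F u v = false) ∧
      (∑ s ∈ S, α s) * (∑ u ∈ U, β u) ≥ (γ / 32) * (Real.logb 2 t) ^ 2 := by
  classical
  have ht0 : 0 < t := by positivity
  have htR : (65536:ℝ) ≤ (t:ℝ) := by exact_mod_cast ht
  set L := Real.logb 2 (t:ℝ) with hLdef
  have hL16 : 16 ≤ L := by
    have h1 : Real.logb 2 (65536:ℝ) = 16 := by
      rw [show (65536:ℝ) = 2^(16:ℕ) by norm_num, Real.logb_pow]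
      norm_num [Real.logb_self_eq_one]
    have h2 := logb2_mono (x := (65536:ℝ)) (by norm_num) htR
    rw [h1] at h2; exact h2
  have hLpos : (0:ℝ) < L := by linarith
  obtain ⟨hγmem, hγlb⟩ := hγ
  obtain ⟨i₀, hi₀⟩ := hγmem
  have hγpos : 0 < γ := hi₀ ▸ mul_pos (hα i₀) (hβ i₀)
  have hγle : ∀ i, γ ≤ α i * β i := fun i => hγlb ⟨i, rfl⟩
  have huniv : (Finset.univ : Finset (Fin t)).Nonempty := ⟨i₀, Finset.mem_univ _⟩
  obtain ⟨imax, -, hA⟩ := Finset.exists_max_image Finset.univ α huniv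
  obtain ⟨jmax, -, hB⟩ := Finset.exists_max_image Finset.univ β huniv
  have hA' : ∀ i, α i ≤ α imax := fun i => hA i (Finset.mem_univ i)
  have hB' : ∀ i, β i ≤ β jmax := fun i => hB i (Finset.mem_univ i)
  have hApos := hα imax
  have hBpos := hβ jmax
  by_cases hAB : γ / 32 * L ^ 2 ≤ α imax * β jmax
  · refine ⟨{imax}, {jmax}, ?_, ?_, ?_⟩
    · intro u hu v hv huv
      rw [Finset.mem_singleton] at hu hv
      exact absurd (hu.trans hv.symm) huv
    · intro u hu v hv huv
      rw [Finset.mem_singleton] at hu hv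
      exact absurd (hu.trans hv.symm) huv
    · rw [Finset.sum_singleton, Finset.sum_singleton]
      exact hAB
  · push_neg at hAB
    have hγAB : γ ≤ α imax * β jmax :=
      le_trans (hγle i₀) (mul_le_mul (hA' i₀) (hB' i₀) (hβ i₀).le hApos.le)
    have hαlb : ∀ i, γ / β jmax ≤ α i := by
      intro i
      rw [div_le_iff₀ hBpos]
      exact le_trans (hγle i) (mul_le_mul_of_nonneg_left (hB' i) (hα i).le)
    have harg1 : ∀ i, 1 ≤ α i * β jmax / γ := by
      intro i
      rw [le_div_iff₀ hγpos, one_mul]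
      exact le_trans (hγle i) (mul_le_mul_of_nonneg_left (hB' i) (hα i).le)
    set f : Fin t → ℕ := fun i => ⌊Real.logb 2 (α i * β jmax / γ)⌋₊ with hf
    set Kn : ℕ := ⌊Real.logb 2 (α imax * β jmax / γ)⌋₊ + 1 with hKn
    have hmap : ∀ i, f i ∈ Finset.range Kn := by
      intro i
      rw [Finset.mem_range, hKn]
      have hle : f i ≤ ⌊Real.logb 2 (α imax * β jmax / γ)⌋₊ := by
        apply Nat.floor_le_floor
        apply logb2_mono (div_pos (mul_pos (hα i) hBpos) hγpos)
        gcongr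
        exact hA' i
      omega
    obtain ⟨k, hkmem, hkmax⟩ := Finset.exists_max_image (Finset.range Kn)
      (fun k => (Finset.univ.filter (fun i => f i = k)).card) ⟨0, by rw [Finset.mem_range]; omega⟩
    set W := Finset.univ.filter (fun i => f i = k) with hWdef
    have htKW : t ≤ Kn * W.card := by
      have hsum := Finset.card_eq_sum_card_fiberwise (s := Finset.univ) (t := Finset.range Kn) (f := f) (fun x _ => hmap x)
      have hle := Finset.sum_le_card_nsmul (Finset.range Kn)
        (fun b => (Finset.univ.filter (fun i => f i = b)).card) W.card
        (fun b hb => hkmax b hb)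
      rw [← hsum] at hle
      simpa [Finset.card_univ, smul_eq_mul, Finset.card_range] using hle
    have hWpos : 0 < W.card := by
      rcases Nat.eq_zero_or_pos W.card with h | h
      · rw [h, Nat.mul_zero] at htKW; omega
      · exact h
    -- bucket bounds
    set c : ℝ := γ * (2:ℝ) ^ (k:ℝ) / β jmax with hcdef
    set d : ℝ := β jmax / (2:ℝ) ^ ((k:ℝ) + 1) with hddef
    have h2pos : (0:ℝ) < (2:ℝ) ^ (k:ℝ) := Real.rpow_pos_of_pos (by norm_num) _
    have h2pos' : (0:ℝ) < (2:ℝ) ^ ((k:ℝ)+1) := Real.rpow_pos_of_pos (by norm_num) _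
    have hcpos : 0 < c := by rw [hcdef]; positivity
    have hdpos : 0 < d := by rw [hddef]; positivity
    have hcd : c * d = γ / 2 := by
      rw [hcdef, hddef]
      rw [Real.rpow_add (by norm_num : (0:ℝ) < 2), Real.rpow_one]
      field_simp
    have hbuck : ∀ i ∈ W, c ≤ α i ∧ d ≤ β i := by
      intro i hi
      rw [hWdef, Finset.mem_filter] at hi
      have hfi : f i = k := hi.2
      have hxpos : (0:ℝ) < α i * β jmax / γ := div_pos (mul_pos (hα i) hBpos) hγpos
      have hlow : (k:ℝ) ≤ Real.logb 2 (α i * β jmax / γ) := by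
        rw [← hfi, hf]
        exact Nat.floor_le (Real.logb_nonneg (by norm_num) (harg1 i))
      have hhigh : Real.logb 2 (α i * β jmax / γ) < (k:ℝ) + 1 := by
        rw [← hfi, hf]
        push_cast
        exact Nat.lt_floor_add_one _
      have hxeq : (2:ℝ) ^ (Real.logb 2 (α i * β jmax / γ)) = α i * β jmax / γ :=
        Real.rpow_logb (by norm_num) (by norm_num) hxpos
      have hx_ge : (2:ℝ) ^ (k:ℝ) ≤ α i * β jmax / γ := by
        rw [← hxeq]
        exact Real.rpow_le_rpow_of_exponent_le (by norm_num) hlow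
      have hx_lt : α i * β jmax / γ < (2:ℝ) ^ ((k:ℝ)+1) := by
        rw [← hxeq]
        exact Real.rpow_lt_rpow_of_exponent_lt (by norm_num) hhigh
      constructor
      · rw [hcdef, div_le_iff₀ hBpos]
        rw [le_div_iff₀ hγpos] at hx_ge
        linarith
      · have hβlb : γ / α i ≤ β i := by
          rw [div_le_iff₀ (hα i)]
          linarith [hγle i, mul_comm (α i) (β i)]
        refine le_trans ?_ hβlb
        rw [hddef, div_le_div_iff₀ h2pos' (hα i)]
        rw [div_lt_iff₀ hγpos] at hx_lt
        nlinarith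
    obtain ⟨R, U, hRW, hUW, hRred, hUblue, hrpos, hspos, hWlt⟩ :=
      prod_ramsey F hsym W (Finset.card_pos.mp hWpos)
    refine ⟨R, U, hRred, hUblue, ?_⟩
    clear_value f Kn W c d
    clear hf hkmax hmap hWdef hcdef hddef
    have hsumR : (R.card:ℝ) * c ≤ ∑ i ∈ R, α i := by
      have := Finset.card_nsmul_le_sum R α c (fun i hi => (hbuck i (hRW hi)).1)
      simpa [nsmul_eq_mul] using this
    have hsumU : (U.card:ℝ) * d ≤ ∑ i ∈ U, β i := by
      have := Finset.card_nsmul_le_sum U β d (fun i hi => (hbuck i (hUW hi)).2)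
      simpa [nsmul_eq_mul] using this
    have hrR : (0:ℝ) < R.card := by exact_mod_cast hrpos
    have hsU : (0:ℝ) < U.card := by exact_mod_cast hspos
    have hprod : ((R.card:ℝ) * U.card) * (γ/2) ≤ (∑ i ∈ R, α i) * (∑ i ∈ U, β i) := by
      have hmm := mul_le_mul hsumR hsumU (by positivity)
        (le_trans (by positivity) hsumR)
      calc ((R.card:ℝ) * U.card) * (γ/2) = ((R.card:ℝ) * c) * ((U.card:ℝ) * d) := by
            rw [← hcd]; ring
        _ ≤ _ := hmm
    -- logarithmic estimates
    have hWR : (0:ℝ) < (W.card:ℝ) := by exact_mod_cast hWpos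
    have hlogWlt : Real.log (W.card:ℝ) < 2 * Real.sqrt ((R.card:ℝ) * U.card) := by
      have := Real.log_lt_log hWR hWlt
      rwa [Real.log_exp] at this
    have hfloorAB : ((⌊Real.logb 2 (α imax * β jmax / γ)⌋₊ : ℕ) : ℝ)
        ≤ Real.logb 2 (α imax * β jmax / γ) :=
      Nat.floor_le (Real.logb_nonneg (by norm_num) (harg1 imax))
    have hABdiv : α imax * β jmax / γ ≤ L^2/32 := by
      rw [div_le_div_iff₀ hγpos (by norm_num : (0:ℝ) < 32)]
      nlinarith [hAB, hγpos]
    have hlogAB : Real.logb 2 (α imax * β jmax / γ) ≤ Real.logb 2 (L^2/32) :=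
      logb2_mono (div_pos (mul_pos hApos hBpos) hγpos) hABdiv
    have hlog32 : Real.logb 2 (L^2/32) = 2 * Real.logb 2 L - 5 := by
      rw [Real.logb_div (by positivity) (by norm_num),
        show (32:ℝ) = 2^(5:ℕ) by norm_num, Real.logb_pow, Real.logb_pow]
      norm_num [Real.logb_self_eq_one]
    have hlogbL : Real.logb 2 L ≤ L/4 := logb2_le_quarter L hL16
    have hKnle : (Kn:ℝ) ≤ L := by
      have : (Kn:ℝ) = ((⌊Real.logb 2 (α imax * β jmax / γ)⌋₊ : ℕ) : ℝ) + 1 := by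
        rw [hKn]; push_cast; ring
      rw [this]
      linarith [hfloorAB, hlogAB, hlog32.le, hlogbL]
    have hKn1 : (1:ℝ) ≤ (Kn:ℝ) := by
      have : 1 ≤ Kn := by omega
      exact_mod_cast this
    have hKn0 : (0:ℝ) < (Kn:ℝ) := lt_of_lt_of_le one_pos hKn1
    have hlogbKn : Real.logb 2 (Kn:ℝ) ≤ L/4 :=
      le_trans (logb2_mono hKn0 hKnle) hlogbL
    have hlogbW : (3/4) * L ≤ Real.logb 2 (W.card:ℝ) := by
      have hcast : (t:ℝ) ≤ (Kn:ℝ) * (W.card:ℝ) := by exact_mod_cast htKW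
      have h1 : L ≤ Real.logb 2 ((Kn:ℝ) * (W.card:ℝ)) := by
        rw [hLdef]
        exact logb2_mono (by positivity) hcast
      rw [Real.logb_mul (ne_of_gt hKn0) (ne_of_gt hWR)] at h1
      linarith only [h1, hlogbKn, hL16]
    have hlog2pos : (0:ℝ) < Real.log 2 := Real.log_pos (by norm_num)
    have hlogWeq : Real.log (W.card:ℝ) = Real.logb 2 (W.card:ℝ) * Real.log 2 := by
      rw [Real.logb]
      field_simp
    have hm : (3/4) * L * Real.log 2 < 2 * Real.sqrt ((R.card:ℝ) * U.card) := by
      calc (3/4) * L * Real.log 2 ≤ Real.logb 2 (W.card:ℝ) * Real.log 2 := by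
            apply mul_le_mul_of_nonneg_right hlogbW hlog2pos.le
        _ = Real.log (W.card:ℝ) := hlogWeq.symm
        _ < _ := hlogWlt
    have hrsnn : (0:ℝ) ≤ (R.card:ℝ) * U.card := mul_nonneg hrR.le hsU.le
    have hsq : ((3/8) * L * Real.log 2)^2 ≤ (R.card:ℝ) * U.card := by
      have h1 : (0:ℝ) ≤ (3/8) * L * Real.log 2 :=
        mul_nonneg (mul_nonneg (by norm_num) hLpos.le) hlog2pos.le
      have h2 : (3/8) * L * Real.log 2 ≤ Real.sqrt ((R.card:ℝ) * U.card) := by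
        linarith only [hm]
      calc ((3/8) * L * Real.log 2)^2 ≤ (Real.sqrt ((R.card:ℝ) * U.card))^2 :=
            pow_le_pow_left₀ h1 h2 2
        _ = (R.card:ℝ) * U.card := Real.sq_sqrt hrsnn
    have hlt2 : (4/9:ℝ) ≤ (Real.log 2)^2 := by nlinarith only [log_two_ge]
    have h3 : L^2/16 ≤ (R.card:ℝ) * U.card := by
      nlinarith only [hsq, sq_nonneg L, hlt2, hLpos]
    have hfin : γ/32 * L^2 ≤ ((R.card:ℝ) * U.card) * (γ/2) := by
      nlinarith only [h3, hγpos]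
    exact le_trans hfin hprod
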